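/- For every ρ ∈ ℂ with |ρ| = 1, every root k ∈ ℂ of the quadratic 2X² + (1 + ρ)X + 2ρ satisfies |k| = 1; conversely, for every k ∈ ℂ with |k| = 1 there exists ρ ∈ ℂ with |ρ| = 1 such that 2k² + (1 + ρ)k + 2ρ = 0. -/

import Mathlib

open Complex

theorem quadratic_roots_on_unit_circle :
    (∀ ρ : ℂ, ‖ρ‖ = 1 →
      ∀ k : ℂ, 2 * k ^ 2 + (1 + ρ) * k + 2 * ρ = 0 → ‖k‖ = 1) ∧
    (∀ k : ℂ, ‖k‖ = 1 →
      ∃ ρ : ℂ, ‖ρ‖ = 1 ∧ 2 * k ^ 2 + (1 + ρ) * k + 2 * ρ = 0) := by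
  constructor
  · intro ρ hρ k hk
    have hk2 : k + 2 ≠ 0 := by
      intro h
      have : k = -2 := by linear_combination h
      rw [this] at hk
      have h6 : (6:ℂ) = 0 := by linear_combination hk
      norm_num at h6
    have hρeq : ρ * (k + 2) = -(2 * k ^ 2 + k) := by linear_combination hk
    have hns : Complex.normSq (k + 2) = Complex.normSq (2 * k ^ 2 + k) := by
      have := congrArg Complex.normSq hρeq
      rw [map_mul, Complex.normSq_neg] at this
      have h1 : Complex.normSq ρ = 1 := by
        rw [← Complex.sq_norm, hρ]; norm_num
      rw [h1, one_mul] at this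
      exact this
    set x := k.re
    set y := k.im
    have hx : (2 * k ^ 2 + k).re = 2 * (x ^ 2 - y ^ 2) + x := by
      simp [Complex.add_re, Complex.mul_re, pow_two]; rfl
    have hy : (2 * k ^ 2 + k).im = 2 * (2 * x * y) + y := by
      simp [Complex.add_im, Complex.mul_im, pow_two]; ring
    have hns' : (x + 2) ^ 2 + y ^ 2 = (2 * (x ^ 2 - y ^ 2) + x) ^ 2 + (2 * (2 * x * y) + y) ^ 2 := by
      have := hns
      rw [Complex.normSq_apply, Complex.normSq_apply, hx, hy] at this
      simpa [pow_two] using this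
    have hr : (x ^ 2 + y ^ 2 - 1) * (x ^ 2 + y ^ 2 + 1 + x) = 0 := by nlinarith [sq_nonneg y, sq_nonneg x]
    have hr2 : x ^ 2 + y ^ 2 = 1 := by
      rcases mul_eq_zero.1 hr with h | h
      · linarith
      · nlinarith [sq_nonneg (x + 1), sq_nonneg y]
    have : ‖k‖ ^ 2 = 1 := by
      rw [Complex.sq_norm, Complex.normSq_apply]
      simpa [pow_two] using hr2
    nlinarith [norm_nonneg k, this]
  · intro k hk
    have hk2 : k + 2 ≠ 0 := by
      intro h
      have : k = -2 := by linear_combination h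
      rw [this] at hk
      norm_num at hk
    refine ⟨-(2 * k ^ 2 + k) / (k + 2), ?_, ?_⟩
    · have hkc : k * (starRingEnd ℂ k + 2) = 2 * k + 1 := by
        have := Complex.mul_conj k
        rw [← Complex.sq_norm, hk] at this
        push_cast at this
        linear_combination this
      have h1 : ‖2 * k ^ 2 + k‖ = ‖k + 2‖ := by
        have : (2 : ℂ) * k ^ 2 + k = k * (k * (starRingEnd ℂ k + 2)) := by
          rw [hkc]; ring
        rw [this, norm_mul, norm_mul, hk, one_mul, one_mul]
        rw [show (starRingEnd ℂ k + 2 : ℂ) = starRingEnd ℂ (k + 2) by simp [map_add, Complex.conj_ofNat]]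
        exact Complex.norm_conj _
      rw [norm_div, norm_neg, h1, div_self]
      simpa using hk2
    · field_simp
      ring
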